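/- (Symmetric Subcodes) Let n ≥ 1 and let s = [s₁,…,s_m] be a list of positive integers with s₁ + ⋯ + s_m = n. Let I ⊆ {0,…,2^n − 1} and suppose that every s-block-preserving permutation of Fin n stabilizes I. Define s' = [s₁,…,s_{m−1}, s_m − 1] if s_m ≥ 2, and s' = [s₁,…,s_{m−1}] if s_m = 1. Then every s'-block-preserving permutation of Fin (n−1) stabilizes both the low nested subset I^ℓ and the high nested subset I^h. -/

import Mathlib

/-- `digitPerm σ i` permutes the (LSB-first) binary digits of `i` according to `σ`. -/
def digitPerm {n : ℕ} (σ : Equiv.Perm (Fin n)) (i : ℕ) : ℕ :=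
  ∑ k : Fin n, if Nat.testBit i k.val then 2 ^ ((σ k).val) else 0

/-- Extend a permutation of `Fin m` to `Fin (m+1)` fixing the last element. -/
def extPerm {m : ℕ} (σ : Equiv.Perm (Fin m)) : Equiv.Perm (Fin (m + 1)) where
  toFun p := if h : p.val < m then (σ ⟨p.val, h⟩).castSucc else p
  invFun p := if h : p.val < m then (σ.symm ⟨p.val, h⟩).castSucc else p
  left_inv p := by
    by_cases h : p.val < m
    · simp only [dif_pos h, Fin.coe_castSucc, Fin.isLt, dif_pos, Fin.eta, Equiv.symm_apply_apply]
      exact Fin.ext rfl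
    · simp [h]
  right_inv p := by
    by_cases h : p.val < m
    · simp only [dif_pos h, Fin.coe_castSucc, Fin.isLt, dif_pos, Fin.eta, Equiv.apply_symm_apply]
      exact Fin.ext rfl
    · simp [h]

lemma extPerm_val {m : ℕ} (σ : Equiv.Perm (Fin m)) (p : Fin (m + 1)) :
    ((extPerm σ) p).val = if h : p.val < m then (σ ⟨p.val, h⟩).val else p.val := by
  by_cases h : p.val < m <;> simp [extPerm, Equiv.coe_fn_mk, h]

lemma sum_range_two_pow_lt (m : ℕ) : ∑ j ∈ Finset.range m, 2 ^ j < 2 ^ m := by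
  induction m with
  | zero => simp
  | succ m ih => rw [Finset.sum_range_succ, pow_succ]; omega

lemma digitPerm_lt {m : ℕ} (σ : Equiv.Perm (Fin m)) (i : ℕ) : digitPerm σ i < 2 ^ m := by
  have h1 : digitPerm σ i ≤ ∑ k : Fin m, 2 ^ ((σ k).val) := by
    apply Finset.sum_le_sum
    intro k _
    split <;> simp
  have h2 : ∑ k : Fin m, 2 ^ ((σ k).val) = ∑ k : Fin m, 2 ^ k.val :=
    Equiv.sum_comp σ (fun k => 2 ^ k.val)
  have h3 : ∑ k : Fin m, 2 ^ k.val = ∑ j ∈ Finset.range m, 2 ^ j :=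
    Fin.sum_univ_eq_sum_range _ m
  have := sum_range_two_pow_lt m
  omega

lemma digitPerm_congr {m : ℕ} (σ : Equiv.Perm (Fin m)) {i j : ℕ}
    (h : ∀ k < m, Nat.testBit i k = Nat.testBit j k) : digitPerm σ i = digitPerm σ j :=
  Finset.sum_congr rfl fun k _ => by rw [h k.val k.isLt]

lemma digitPerm_extPerm {m : ℕ} (σ : Equiv.Perm (Fin m)) (i : ℕ) :
    digitPerm (extPerm σ) i = digitPerm σ i + (if Nat.testBit i m then 2 ^ m else 0) := by
  unfold digitPerm
  rw [Fin.sum_univ_castSucc]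
  congr 1
  · apply Finset.sum_congr rfl
    intro k _
    have hv : ((extPerm σ) k.castSucc).val = (σ k).val := by
      rw [extPerm_val]
      simp [k.isLt]
    simp only [Fin.coe_castSucc, hv]
  · have hv : ((extPerm σ) (Fin.last m)).val = m := by
      rw [extPerm_val]; simp
    simp [hv]

lemma testBit_of_ge {i m : ℕ} (h1 : 2 ^ m ≤ i) (h2 : i < 2 ^ (m + 1)) :
    Nat.testBit i m = true := by
  rw [Nat.testBit_eq_decide_div_mod_eq]
  have : i / 2 ^ m = 1 := by
    apply Nat.div_eq_of_lt_le <;> rw [pow_succ] at * <;> omega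
  simp [this]

lemma testBit_add_two_pow {j m k : ℕ} (h : k < m) :
    Nat.testBit (j + 2 ^ m) k = Nat.testBit j k := by
  rw [Nat.testBit_eq_decide_div_mod_eq, Nat.testBit_eq_decide_div_mod_eq]
  have hd : 2 ^ k ∣ 2 ^ m := pow_dvd_pow 2 (le_of_lt h)
  obtain ⟨c, hc⟩ := hd
  have h2 : (j + 2 ^ m) / 2 ^ k = j / 2 ^ k + c := by
    rw [hc, Nat.add_mul_div_left _ _ (Nat.pow_pos (n := k) (by norm_num))]
  rw [h2]
  have hceven : c % 2 = 0 := by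
    have : 2 ^ m = 2 ^ k * (2 ^ (m - k - 1) * 2) := by
      rw [← pow_succ, ← pow_add]
      congr 1
      omega
    have hc2 : c = 2 ^ (m - k - 1) * 2 := by
      have hpos : 0 < 2 ^ k := Nat.pow_pos (n := k) (by norm_num)
      exact Nat.eq_of_mul_eq_mul_left hpos (by rw [← hc, this])
    simp [hc2]
  simp only [decide_eq_decide]
  omega

lemma sum_take_le (l : List ℕ) (k : ℕ) : (l.take k).sum ≤ l.sum := by
  conv_rhs => rw [← List.take_append_drop k l]
  rw [List.sum_append]
  exact Nat.le_add_right _ _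

/-- `σ` stabilizes the set `I`. -/
def Stabilizes {n : ℕ} (σ : Equiv.Perm (Fin n)) (I : Set ℕ) : Prop :=
  ∀ i ∈ I, digitPerm σ i ∈ I

/-- Low nested subset `I^ℓ`. -/
def lowNested (n : ℕ) (I : Set ℕ) : Set ℕ := {i ∈ I | i < 2 ^ (n - 1)}

/-- High nested subset `I^h`. -/
def highNested (n : ℕ) (I : Set ℕ) : Set ℕ :=
  {j | ∃ i ∈ I, 2 ^ (n - 1) ≤ i ∧ j = i - 2 ^ (n - 1)}

/-- `σ` is block-preserving for the block-size profile `s`: every position in the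
`k`-th block (whose positions are `[ (s.take k).sum, (s.take (k+1)).sum )`) is mapped
into the same block. -/
def BlockPreserving {n : ℕ} (s : List ℕ) (σ : Equiv.Perm (Fin n)) : Prop :=
  ∀ k < s.length, ∀ p : Fin n,
    (s.take k).sum ≤ p.val → p.val < (s.take (k + 1)).sum →
    ((s.take k).sum ≤ (σ p).val ∧ (σ p).val < (s.take (k + 1)).sum)

/-- **Symmetric Subcodes.** If all `s`-block-preserving permutations stabilize `I`,
then all `s'`-block-preserving permutations stabilize both nested subsets, where `s'`
is `s` with its last entry reduced by one (the last entry being dropped if it is `1`). -/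
theorem symmetric_subcodes {n : ℕ} (hn : 1 ≤ n)
    (s : List ℕ) (hne : s ≠ []) (hpos : ∀ x ∈ s, 0 < x) (hsum : s.sum = n)
    (I : Set ℕ) (hI : I ⊆ {i | i < 2 ^ n})
    (hstab : ∀ σ : Equiv.Perm (Fin n), BlockPreserving s σ → Stabilizes σ I)
    (s' : List ℕ)
    (hs' : (2 ≤ s.getLast hne ∧ s' = s.dropLast ++ [s.getLast hne - 1]) ∨
           (s.getLast hne = 1 ∧ s' = s.dropLast)) :
    ∀ σ' : Equiv.Perm (Fin (n - 1)), BlockPreserving s' σ' →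
      Stabilizes σ' (lowNested n I) ∧ Stabilizes σ' (highNested n I) := by
  obtain ⟨m, rfl⟩ : ∃ m, n = m + 1 := ⟨n - 1, (Nat.succ_pred_eq_of_pos hn).symm⟩
  suffices h : ∀ σ0 : Equiv.Perm (Fin m), BlockPreserving s' σ0 →
      Stabilizes σ0 (lowNested (m + 1) I) ∧ Stabilizes σ0 (highNested (m + 1) I) by
    exact fun σ' hb => h σ' hb
  intro σ0 hb0
  set L := s.dropLast with hLdef
  set a := s.getLast hne with hadef
  have hsL : L ++ [a] = s := List.dropLast_append_getLast hne
  have hlen : s.length = L.length + 1 := by rw [← hsL]; simp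
  have hsumLa : L.sum + a = m + 1 := by
    rw [← hsum, ← hsL, List.sum_append, List.sum_cons, List.sum_nil]; omega
  have hapos : 0 < a := hpos a (List.getLast_mem hne)
  have htake : ∀ j, j ≤ L.length → s.take j = L.take j := by
    intro j hj; rw [← hsL, List.take_append_of_le_length hj]
  -- the extended permutation is `s`-block-preserving
  have hBP : BlockPreserving s (extPerm σ0) := by
    intro k hk p hp1 hp2
    by_cases hpm : p.val < m
    · have hv : ((extPerm σ0) p).val = (σ0 ⟨p.val, hpm⟩).val := by
        rw [extPerm_val]; simp [hpm]
      rw [hv]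
      have hkL : k ≤ L.length := by omega
      rcases hs' with ⟨ha2, hs'eq⟩ | ⟨ha1, hs'eq⟩
      · have hlen' : s'.length = L.length + 1 := by rw [hs'eq]; simp
        have htake' : ∀ j, j ≤ L.length → s'.take j = L.take j := by
          intro j hj; rw [hs'eq, List.take_append_of_le_length hj]
        have hsum' : s'.sum = m := by
          rw [hs'eq, List.sum_append, List.sum_cons, List.sum_nil]; omega
        have h1' : (s'.take k).sum ≤ p.val := by
          rw [htake' k hkL, ← htake k hkL]; exact hp1
        have h2' : p.val < (s'.take (k + 1)).sum := by
          by_cases hk1 : k + 1 ≤ L.length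
          · rw [htake' _ hk1, ← htake _ hk1]; exact hp2
          · have hkeq : k + 1 = s'.length := by omega
            rw [hkeq, List.take_length, hsum']; exact hpm
        have hres := hb0 k (by omega) ⟨p.val, hpm⟩ h1' h2'
        constructor
        · rw [htake k hkL, ← htake' k hkL]; exact hres.1
        · by_cases hk1 : k + 1 ≤ L.length
          · rw [htake _ hk1, ← htake' _ hk1]; exact hres.2
          · have hkeq : k + 1 = s.length := by omega
            rw [hkeq, List.take_length, hsum]
            have hlt : (σ0 ⟨p.val, hpm⟩).val < m := (σ0 ⟨p.val, hpm⟩).isLt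
            omega
      · -- a = 1, s' = L
        have hlen' : s'.length = L.length := by rw [hs'eq]
        have htake' : ∀ j, s'.take j = L.take j := by intro j; rw [hs'eq]
        have hsum' : s'.sum = m := by rw [hs'eq]; omega
        by_cases hk1 : k + 1 ≤ L.length
        · have h1' : (s'.take k).sum ≤ p.val := by
            rw [htake' k, ← htake k hkL]; exact hp1
          have h2' : p.val < (s'.take (k + 1)).sum := by
            rw [htake' _, ← htake _ hk1]; exact hp2
          have hres := hb0 k (by omega) ⟨p.val, hpm⟩ h1' h2'
          constructor
          · rw [htake k hkL, ← htake' k]; exact hres.1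
          · rw [htake _ hk1, ← htake' _]; exact hres.2
        · -- k = L.length : last block is the singleton {m}, contradiction with p.val < m
          exfalso
          have hkeq : k = L.length := by omega
          have : (s.take k).sum = m := by
            rw [hkeq, htake _ le_rfl, List.take_length]; omega
          omega
    · -- p.val = m is fixed
      have hv : ((extPerm σ0) p).val = p.val := by rw [extPerm_val]; simp [hpm]
      rw [hv]; exact ⟨hp1, hp2⟩
  constructor
  · -- low nested subset
    intro i hi
    obtain ⟨hiI, hilt⟩ := hi
    have hilt' : i < 2 ^ m := by simpa using hilt
    have hbit : Nat.testBit i m = false := Nat.testBit_eq_false_of_lt hilt'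
    have hmem := hstab (extPerm σ0) hBP i hiI
    rw [digitPerm_extPerm, hbit] at hmem
    simp only [Bool.false_eq_true, if_false, Nat.add_zero] at hmem
    exact ⟨hmem, by simpa using digitPerm_lt σ0 i⟩
  · -- high nested subset
    intro j hj
    obtain ⟨i, hiI, hge, hje⟩ := hj
    have hge' : 2 ^ m ≤ i := by simpa using hge
    have hje' : j = i - 2 ^ m := by simpa using hje
    have hilt : i < 2 ^ (m + 1) := hI hiI
    have hbit : Nat.testBit i m = true := testBit_of_ge hge' hilt
    have hieq : i = j + 2 ^ m := by omega
    have hcong : digitPerm σ0 i = digitPerm σ0 j :=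
      digitPerm_congr σ0 (fun k hk => by rw [hieq]; exact testBit_add_two_pow hk)
    have hmem := hstab (extPerm σ0) hBP i hiI
    rw [digitPerm_extPerm, hbit, if_pos rfl, hcong] at hmem
    refine ⟨digitPerm σ0 j + 2 ^ m, hmem, ?_, ?_⟩
    · simp
    · simp
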